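/- arXiv:1903.06507 — 3 statements merged into one kernel-verified Lean document; each statement's English description precedes it below -/
import Mathlib

section
/- Let $\mathcal{T}>0$, $m\in\mathbb{N}$, $\varrho_0>0$, $\tau:[0,\infty)\to(0,\infty)$ continuous, $\rho(t)=\exp(-\int_0^t \tau(s)^{-1}ds)$, and $h$ a positive decreasing function on $[0,\mathcal{T}]$. Define $\ell^\varrho(t) = \frac{[h(t)-h(\mathcal{T})]^m}{\int_0^{\mathcal{T}}\rho^{-1}(s)[h(s)-h(\mathcal{T})]^m ds}\,\chi_{[0,\mathcal{T})}(t)$. Then the solution of $\tau\varrho'+\varrho=-\tau\varrho_0\ell^\varrho$ with $\varrho(0)=\varrho_0$ vanishes identically for $t\geq\mathcal{T}$. -/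
open Set MeasureTheory intervalIntegral Real

theorem relaxation_finite_stopping_time (T ρ0 : ℝ) (hT : 0 < T) (hρ0 : 0 < ρ0) (m : ℕ)
    (τ h : ℝ → ℝ)
    (hτ : ContinuousOn τ (Set.Ici 0)) (hτpos : ∀ t ∈ Set.Ici (0:ℝ), 0 < τ t)
    (hh : ∀ t ∈ Set.Icc 0 T, 0 < h t) (hhdec : StrictAntiOn h (Set.Icc 0 T))
    (ρ : ℝ → ℝ) (hρ : ∀ t, ρ t = Real.exp (-∫ s in (0:ℝ)..t, (τ s)⁻¹))
    (ℓ : ℝ → ℝ)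
    (hℓ : ∀ t, ℓ t = Set.indicator (Set.Ico 0 T)
      (fun t => (h t - h T)^m / ∫ s in (0:ℝ)..T, (ρ s)⁻¹ * (h s - h T)^m) t)
    (ϱ ϱ' : ℝ → ℝ)
    (hcont : ContinuousOn ϱ (Set.Ici 0))
    (hode : ∀ t ∈ Set.Ioi (0:ℝ),
      HasDerivAt ϱ (ϱ' t) t ∧ τ t * ϱ' t + ϱ t = -(τ t * ρ0 * ℓ t))
    (hinit : ϱ 0 = ρ0) :
    ∀ t, T ≤ t → ϱ t = 0 := by
  set I : ℝ → ℝ := fun u => ∫ s in (0:ℝ)..u, (τ s)⁻¹ with hIdef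
  set D : ℝ := ∫ s in (0:ℝ)..T, (ρ s)⁻¹ * (h s - h T)^m with hDdef
  -- basic facts about τ⁻¹
  have hτinv : ContinuousOn (fun s => (τ s)⁻¹) (Set.Ici 0) :=
    hτ.inv₀ (fun t ht => (hτpos t ht).ne')
  have hτint : ∀ b : ℝ, 0 ≤ b → IntervalIntegrable (fun s => (τ s)⁻¹) volume 0 b := by
    intro b hb
    apply ContinuousOn.intervalIntegrable
    rw [Set.uIcc_of_le hb]
    exact hτinv.mono (Set.Icc_subset_Ici_self)
  -- derivative of I on (0,∞)
  have hIderiv : ∀ t ∈ Set.Ioi (0:ℝ), HasDerivAt I (τ t)⁻¹ t := by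
    intro t ht
    have hc : ContinuousOn (fun s => (τ s)⁻¹) (Set.Ioi 0) :=
      hτinv.mono (Set.Ioi_subset_Ici le_rfl)
    exact intervalIntegral.integral_hasDerivAt_right (hτint t (le_of_lt ht))
      (ContinuousOn.stronglyMeasurableAtFilter isOpen_Ioi hc t ht)
      (hc.continuousAt (Ioi_mem_nhds ht))
  -- continuity of I on [0,b]
  have hIcont : ∀ b : ℝ, 0 ≤ b → ContinuousOn I (Set.Icc 0 b) := by
    intro b hb
    have := intervalIntegral.continuousOn_primitive_interval
      (μ := volume) (f := fun s => (τ s)⁻¹) (a := 0) (b := b)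
      (by rw [Set.uIcc_of_le hb]; exact ((hτinv.mono Set.Icc_subset_Ici_self).integrableOn_compact isCompact_Icc))
    rwa [Set.uIcc_of_le hb] at this
  -- ψ
  set ψ : ℝ → ℝ := fun u => ϱ u * Real.exp (I u) with hψdef
  have hψcont : ∀ b : ℝ, 0 ≤ b → ContinuousOn ψ (Set.Icc 0 b) := by
    intro b hb
    exact (hcont.mono Set.Icc_subset_Ici_self).mul
      (Real.continuous_exp.comp_continuousOn (hIcont b hb))
  set g : ℝ → ℝ := fun s => (-ρ0 * Real.exp (I s)) * ℓ s with hgdef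
  have hψderiv : ∀ t ∈ Set.Ioi (0:ℝ), HasDerivAt ψ (g t) t := by
    intro t ht
    obtain ⟨hd, heq⟩ := hode t ht
    have hτne : τ t ≠ 0 := (hτpos t (le_of_lt (Set.mem_Ioi.mp ht))).ne'
    have h3 := hd.fun_mul (hIderiv t ht).exp
    refine h3.congr_deriv ?_
    have hϱ' : ϱ' t = -(ρ0 * ℓ t) - ϱ t / τ t := by
      field_simp
      linarith
    rw [hgdef]
    simp only [hϱ']
    field_simp
    ring
  -- clamp
  have hclampmem : ∀ s : ℝ, max 0 (min s T) ∈ Set.Icc 0 T :=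
    fun s => ⟨le_max_left _ _, max_le hT.le (min_le_right _ _)⟩
  have hclamp : Antitone (fun s : ℝ => h (max 0 (min s T))) := by
    intro a b hab
    exact hhdec.antitoneOn (hclampmem a) (hclampmem b)
      (max_le_max le_rfl (min_le_min_right _ hab))
  have hclamp_eq : ∀ s ∈ Set.Icc 0 T, max 0 (min s T) = s := by
    intro s hs
    rw [min_eq_left hs.2, max_eq_right hs.1]
  -- ℓ in measurable form
  have hℓeq : ℓ = Set.indicator (Set.Ico 0 T)
      (fun s => (h (max 0 (min s T)) - h T)^m / D) := by
    funext s
    rw [hℓ s]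
    exact congrFun (Set.indicator_congr fun x hx => by
      rw [hclamp_eq x ⟨hx.1, hx.2.le⟩]) s
  have hℓmeas : Measurable ℓ := by
    rw [hℓeq]
    exact (((hclamp.measurable.sub_const _).pow_const m).div_const D).indicator
      measurableSet_Ico
  -- bound for the clamp function
  have hbound : ∀ s : ℝ, |(h (max 0 (min s T)) - h T)^m| ≤ (h 0 - h T)^m := by
    intro s
    have h1 : h T ≤ h (max 0 (min s T)) := by
      rcases eq_or_lt_of_le (hclampmem s).2 with heq | hlt
      · rw [heq]
      · exact (hhdec (hclampmem s) ⟨hT.le, le_rfl⟩ hlt).le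
    have h2 : h (max 0 (min s T)) ≤ h 0 := by
      rcases eq_or_lt_of_le (hclampmem s).1 with heq | hlt
      · rw [← heq]
      · exact (hhdec ⟨le_rfl, hT.le⟩ (hclampmem s) hlt).le
    rw [abs_of_nonneg (pow_nonneg (by linarith) m)]
    exact pow_le_pow_left₀ (by linarith) (by linarith) m
  -- F : measurable version of the D-integrand
  set F : ℝ → ℝ := fun s => Real.exp (I s) * (h (max 0 (min s T)) - h T)^m with hFdef
  have hρinv : ∀ s, (ρ s)⁻¹ = Real.exp (I s) := by
    intro s
    rw [hρ s, ← Real.exp_neg, neg_neg]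
  have hFint : IntervalIntegrable F volume 0 T := by
    apply MeasureTheory.IntegrableOn.intervalIntegrable
    rw [Set.uIcc_of_le hT.le]
    apply MeasureTheory.IntegrableOn.continuousOn_mul
      (Real.continuous_exp.comp_continuousOn (hIcont T hT.le)) _ isCompact_Icc
    apply MeasureTheory.Integrable.mono' (g := fun _ => (h 0 - h T)^m)
    · exact integrableOn_const (measure_Icc_lt_top).ne
    · exact (((hclamp.measurable.sub_const _).pow_const m)).aestronglyMeasurable
    · exact Filter.Eventually.of_forall fun s => hbound s
  -- D equals the integral of F, and is positive
  have hDeq : D = ∫ s in (0:ℝ)..T, F s := by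
    rw [hDdef]
    apply intervalIntegral.integral_congr
    intro s hs
    rw [Set.uIcc_of_le hT.le] at hs
    show (ρ s)⁻¹ * (h s - h T)^m = Real.exp (I s) * (h (max 0 (min s T)) - h T)^m
    rw [hρinv s, hclamp_eq s hs]
  have hD : 0 < D := by
    rw [hDeq]
    apply intervalIntegral.intervalIntegral_pos_of_pos_on hFint _ hT
    intro x hx
    have hxmem : x ∈ Set.Icc 0 T := ⟨hx.1.le, hx.2.le⟩
    have : h T < h x := hhdec hxmem ⟨hT.le, le_rfl⟩ hx.2
    have hpow : 0 < (h (max 0 (min x T)) - h T)^m := by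
      rw [hclamp_eq x hxmem]
      exact pow_pos (by linarith) m
    exact mul_pos (Real.exp_pos _) hpow
  -- global integrability of ℓ
  have hℓintg : MeasureTheory.Integrable ℓ volume := by
    apply MeasureTheory.Integrable.mono'
      (g := Set.indicator (Set.Ico 0 T) (fun _ => (h 0 - h T)^m / D))
    · rw [integrable_indicator_iff measurableSet_Ico]
      exact integrableOn_const (measure_Ico_lt_top).ne
    · exact hℓmeas.aestronglyMeasurable
    · filter_upwards with s
      rw [hℓeq]
      by_cases hs : s ∈ Set.Ico 0 T
      · rw [Set.indicator_of_mem hs, Set.indicator_of_mem hs, Real.norm_eq_abs, abs_div,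
          abs_of_pos hD]
        exact div_le_div_of_nonneg_right (hbound s) hD.le
      · rw [Set.indicator_of_notMem hs, Set.indicator_of_notMem hs]; simp
  -- interval integrability of g
  have hgint : ∀ a b : ℝ, 0 ≤ a → 0 ≤ b → IntervalIntegrable g volume a b := by
    intro a b ha hb
    apply IntervalIntegrable.continuousOn_mul hℓintg.intervalIntegrable
    have hsub : Set.uIcc a b ⊆ Set.Icc 0 (max a b) := by
      rw [show Set.uIcc a b = Set.Icc (min a b) (max a b) from rfl]
      exact Set.Icc_subset_Icc (le_min ha hb) le_rfl
    exact (continuousOn_const.mul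
      (Real.continuous_exp.comp_continuousOn (hIcont _ (le_max_of_le_left ha)))).mono hsub
  -- FTC on [0,T]
  have hstep1 : ∫ y in (0:ℝ)..T, g y = ψ T - ψ 0 :=
    intervalIntegral.integral_eq_sub_of_hasDeriv_right_of_le hT.le (hψcont T hT.le)
      (fun x hx => (hψderiv x hx.1).hasDerivWithinAt)
      (hgint 0 T le_rfl hT.le)
  -- value of the integral of g over [0,T]
  have hone : ∫ s in (0:ℝ)..T, g s = -ρ0 := by
    have hcongr : ∫ s in (0:ℝ)..T, g s
        = ∫ s in (0:ℝ)..T, -ρ0 * (F s / D) := by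
      apply intervalIntegral.integral_congr_ae
      have hTne : ∀ᵐ x : ℝ, x ∉ ({T} : Set ℝ) :=
        MeasureTheory.measure_eq_zero_iff_ae_notMem.mp (measure_singleton T)
      filter_upwards [hTne] with x hxne hxI
      rw [Set.uIoc_of_le hT.le] at hxI
      have hxmem : x ∈ Set.Ico 0 T :=
        ⟨hxI.1.le, lt_of_le_of_ne hxI.2 (by simpa using hxne)⟩
      show (-ρ0 * Real.exp (I x)) * ℓ x
        = -ρ0 * (Real.exp (I x) * (h (max 0 (min x T)) - h T)^m / D)
      rw [hℓ x, Set.indicator_of_mem hxmem, hclamp_eq x ⟨hxmem.1, hxmem.2.le⟩]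
      ring
    rw [hcongr, intervalIntegral.integral_const_mul]
    have h1 : ∫ s in (0:ℝ)..T, F s / D = 1 := by
      rw [intervalIntegral.integral_div, ← hDeq, div_self hD.ne']
    rw [h1, mul_one]
  have hψ0 : ψ 0 = ρ0 := by
    show ϱ 0 * Real.exp (I 0) = ρ0
    have hI0 : I 0 = 0 := intervalIntegral.integral_same
    rw [hinit, hI0, Real.exp_zero, mul_one]
  have hψT : ψ T = 0 := by
    rw [hone] at hstep1
    rw [hψ0] at hstep1
    linarith
  -- conclusion
  intro t ht
  have hψt : ψ t = 0 := by
    rcases eq_or_lt_of_le ht with rfl | hlt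
    · exact hψT
    · have hstep2 : ∫ y in T..t, g y = ψ t - ψ T :=
        intervalIntegral.integral_eq_sub_of_hasDeriv_right_of_le hlt.le
          ((hψcont t (hT.le.trans ht)).mono (Set.Icc_subset_Icc hT.le le_rfl))
          (fun x hx => (hψderiv x (lt_trans hT hx.1)).hasDerivWithinAt)
          (hgint T t hT.le (hT.le.trans ht))
      have hzero : ∫ y in T..t, g y = 0 := by
        have hcg : ∫ y in T..t, g y = ∫ _ in T..t, (0:ℝ) := by
          apply intervalIntegral.integral_congr
          intro s hs
          rw [Set.uIcc_of_le hlt.le] at hs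
          have hℓ0 : ℓ s = 0 := by
            rw [hℓ s, Set.indicator_of_notMem]
            intro hmem
            exact absurd hmem.2 (not_lt.2 hs.1)
          show (-ρ0 * Real.exp (I s)) * ℓ s = 0
          rw [hℓ0, mul_zero]
        rw [hcg, intervalIntegral.integral_zero]
      rw [hzero, hψT] at hstep2
      linarith
  have : ϱ t * Real.exp (I t) = 0 := hψt
  rcases mul_eq_zero.mp this with h0 | h0
  · exact h0
  · exact absurd h0 (Real.exp_ne_zero _)
end

section
/- Let $\mathcal{T}>0$, $n\in\mathbb{N}$, $p_n(t)=(\mathcal{T}-t)^n$, $I_n(t)=\int_0^t e^s p_n(s)\,ds$, and $\varrho_n(t)=e^{-t}[1-I_n(t)/I_n(\mathcal{T})]$ for $t\in[0,\mathcal{T}]$, extended by $0$ outside $[0,\mathcal{T}]$. Then $\varrho_n$ is decreasing and convex on $(0,\mathcal{T})$, and $\varrho_n^{(k)}(t)\to 0$ as $t\to\mathcal{T}^-$ for each $k\in\{0,1,\ldots,n-1\}$. -/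
open Set Filter intervalIntegral

theorem rho_n_properties (T : ℝ) (hT : 0 < T) (n : ℕ)
    (I : ℝ → ℝ) (hI : ∀ t, I t = ∫ s in (0:ℝ)..t, Real.exp s * (T - s)^n)
    (ϱ : ℝ → ℝ)
    (hϱ : ∀ t, ϱ t = if t ∈ Set.Icc (0:ℝ) T then Real.exp (-t) * (1 - I t / I T) else 0) :
    AntitoneOn ϱ (Set.Ioo 0 T) ∧ ConvexOn ℝ (Set.Ioo 0 T) ϱ
      ∧ ∀ k < n, Filter.Tendsto (iteratedDeriv k ϱ) (nhdsWithin T (Set.Iio T)) (nhds 0) := by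
  have hIfun : I = fun t => ∫ s in (0:ℝ)..t, Real.exp s * (T - s)^n := funext hI
  have hcont : Continuous fun s : ℝ => Real.exp s * (T - s)^n := by continuity
  -- derivative of I
  have hIder : ∀ t, HasDerivAt I (Real.exp t * (T - t)^n) t := by
    intro t
    rw [hIfun]
    exact (hcont.integral_hasStrictDerivAt 0 t).hasDerivAt
  have hIcont : Continuous I :=
    continuous_iff_continuousAt.2 fun t => (hIder t).continuousAt
  -- positivity of I T
  have hITpos : 0 < I T := by
    rw [hI]
    apply intervalIntegral.intervalIntegral_pos_of_pos_on (hcont.intervalIntegrable 0 T)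
      _ hT
    intro x hx
    exact mul_pos (Real.exp_pos x) (pow_pos (by linarith [hx.2]) n)
  have hITne : I T ≠ 0 := ne_of_gt hITpos
  -- monotonicity: I t ≤ I T on [0, T]
  have hmono : ∀ t ∈ Icc (0:ℝ) T, I t ≤ I T := by
    intro t ht
    have hadd : (∫ s in (0:ℝ)..t, Real.exp s * (T - s)^n)
        + (∫ s in t..T, Real.exp s * (T - s)^n)
        = ∫ s in (0:ℝ)..T, Real.exp s * (T - s)^n :=
      intervalIntegral.integral_add_adjacent_intervals
        (hcont.intervalIntegrable 0 t) (hcont.intervalIntegrable t T)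
    have hnn : 0 ≤ ∫ s in t..T, Real.exp s * (T - s)^n := by
      apply intervalIntegral.integral_nonneg ht.2
      intro u hu
      exact mul_nonneg (Real.exp_pos u).le (pow_nonneg (by linarith [hu.2]) n)
    rw [hI t, hI T]
    linarith
  set g : ℝ → ℝ := fun t => Real.exp (-t) * (1 - I t / I T) with hgdef
  have hgnn : ∀ t ∈ Icc (0:ℝ) T, 0 ≤ g t := by
    intro t ht
    have h1 : I t / I T ≤ 1 := (div_le_one hITpos).2 (hmono t ht)
    exact mul_nonneg (Real.exp_pos (-t)).le (by linarith)
  -- derivative of g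
  have hg' : ∀ t, HasDerivAt g (-g t - (T - t)^n / I T) t := by
    intro t
    have h1 : HasDerivAt (fun t : ℝ => Real.exp (-t)) (Real.exp (-t) * (-1)) t :=
      ((hasDerivAt_id t).neg).exp
    have h2 : HasDerivAt (fun t => 1 - I t / I T) (-(Real.exp t * (T - t)^n / I T)) t :=
      ((hIder t).div_const (I T)).const_sub 1
    have := h1.mul h2
    refine this.congr_deriv ?_
    symm
    have he : Real.exp (-t) * Real.exp t = 1 := by
      rw [← Real.exp_add]; simp
    simp only [hgdef]
    linear_combination ((T - t)^n / I T) * he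
  have hgcont : Continuous g :=
    continuous_iff_continuousAt.2 fun t => (hg' t).continuousAt
  -- second derivative of g
  have hg2' : ∀ t, HasDerivAt (fun t => -g t - (T - t)^n / I T)
      (g t + (T - t)^n / I T + (n * (T - t)^(n-1)) / I T) t := by
    intro t
    have hp : HasDerivAt (fun t : ℝ => (T - t)^n) ((n : ℝ) * (T - t)^(n-1) * (-1)) t :=
      ((hasDerivAt_id t).const_sub T).pow n
    have := ((hg' t).neg).sub (hp.div_const (I T))
    refine this.congr_deriv ?_
    ring
  -- rho = g on Ioo
  have hEq : Set.EqOn ϱ g (Ioo 0 T) := by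
    intro t ht
    rw [hϱ t, if_pos (Ioo_subset_Icc_self ht)]
  -- rho continuous on Ioo
  have hϱcont : ContinuousOn ϱ (Ioo 0 T) := (hgcont.continuousOn).congr hEq
  -- rho has deriv on Ioo
  have hϱder : ∀ t ∈ Ioo (0:ℝ) T, HasDerivAt ϱ (-g t - (T - t)^n / I T) t := by
    intro t ht
    apply (hg' t).congr_of_eventuallyEq
    filter_upwards [isOpen_Ioo.mem_nhds ht] with y hy using hEq hy
  constructor
  · -- antitone
    intro a ha b hb hab
    rw [hEq ha, hEq hb]
    have := antitoneOn_of_deriv_nonpos (convex_Ioo (0:ℝ) T) hgcont.continuousOn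
      (fun x _ => (hg' x).differentiableAt.differentiableWithinAt)
      (fun x hx => by
        rw [(hg' x).deriv]
        rw [interior_Ioo] at hx
        have h1 := hgnn x (Ioo_subset_Icc_self hx)
        have h2 : 0 ≤ (T - x)^n / I T :=
          div_nonneg (pow_nonneg (by linarith [hx.2]) n) hITpos.le
        linarith)
    exact this ha hb hab
  constructor
  · -- convex
    apply convexOn_of_hasDerivWithinAt2_nonneg (convex_Ioo (0:ℝ) T) hϱcont
      (f' := fun t => -g t - (T - t)^n / I T)
      (f'' := fun t => g t + (T - t)^n / I T + (n * (T - t)^(n-1)) / I T)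
    · intro x hx
      rw [interior_Ioo] at hx
      exact (hϱder x hx).hasDerivWithinAt
    · intro x hx
      exact (hg2' x).hasDerivWithinAt
    · intro x hx
      rw [interior_Ioo] at hx
      have h1 := hgnn x (Ioo_subset_Icc_self hx)
      have h2 : 0 ≤ (T - x)^n / I T :=
        div_nonneg (pow_nonneg (by linarith [hx.2]) n) hITpos.le
      have h3 : 0 ≤ ((n : ℝ) * (T - x)^(n-1)) / I T :=
        div_nonneg (mul_nonneg (Nat.cast_nonneg n) (pow_nonneg (by linarith [hx.2]) (n-1)))
          hITpos.le
      linarith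
  · -- iterated derivatives tend to 0
    set F : ℕ → ℝ → ℝ := fun k t => (-1:ℝ)^k *
      (g t + (∑ j ∈ Finset.range k, ((n.factorial : ℝ) / (n - j).factorial) * (T - t)^(n - j))
        / I T) with hFdef
    -- derivative chain
    have hF : ∀ k < n, ∀ t, HasDerivAt (F k) (F (k+1) t) t := by
      intro k hk t
      have hsum : HasDerivAt
          (fun t => ∑ j ∈ Finset.range k,
            ((n.factorial : ℝ) / (n - j).factorial) * (T - t)^(n - j))
          (∑ j ∈ Finset.range k,
            ((n.factorial : ℝ) / (n - j).factorial) * ((n - j : ℕ) * (T - t)^(n - j - 1) * (-1)))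
          t := by
        apply HasDerivAt.fun_sum
        intro j _
        exact (((hasDerivAt_id t).const_sub T).pow (n - j)).const_mul _
      have key : (∑ j ∈ Finset.range k,
            ((n.factorial : ℝ) / (n - j).factorial) * ((n - j : ℕ) * (T - t)^(n - j - 1) * (-1)))
          = (T - t)^n - ∑ j ∈ Finset.range (k+1),
            ((n.factorial : ℝ) / (n - j).factorial) * (T - t)^(n - j) := by
        apply eq_sub_of_add_eq
        rw [Finset.sum_range_succ']
        have h0 : ((n.factorial : ℝ) / (n - 0).factorial) * (T - t)^(n - 0) = (T - t)^n := by
          rw [Nat.sub_zero, div_self (Nat.cast_ne_zero.2 n.factorial_ne_zero), one_mul]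
        rw [h0, ← add_assoc, ← Finset.sum_add_distrib]
        rw [Finset.sum_eq_zero, zero_add]
        intro j hj
        have hjn : j < n := lt_of_lt_of_le (Finset.mem_range.1 hj) hk.le
        obtain ⟨m, hm⟩ : ∃ m, n - j = m + 1 := ⟨n - j - 1, by omega⟩
        rw [show n - (j + 1) = m from by omega, show n - j - 1 = m from by omega, hm,
          Nat.factorial_succ]
        have hne : (m.factorial : ℝ) ≠ 0 := Nat.cast_ne_zero.2 m.factorial_ne_zero
        push_cast
        field_simp
        ring
      have := ((hg' t).add (hsum.div_const (I T))).const_mul ((-1:ℝ)^k)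
      refine this.congr_deriv ?_
      rw [key]
      simp only [hFdef]
      rw [pow_succ]
      field_simp
      ring
    -- iterated derivative equals F k on Ioo
    have hiter : ∀ k, k ≤ n → Set.EqOn (iteratedDeriv k ϱ) (F k) (Ioo 0 T) := by
      intro k
      induction k with
      | zero =>
        intro _ t ht
        simp only [iteratedDeriv_zero, hFdef, pow_zero, one_mul, Finset.range_zero,
          Finset.sum_empty, zero_div, add_zero]
        exact hEq ht
      | succ k ih =>
        intro hk t ht
        have hk' : k < n := hk
        rw [iteratedDeriv_succ]
        have hev : iteratedDeriv k ϱ =ᶠ[nhds t] F k := by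
          filter_upwards [isOpen_Ioo.mem_nhds ht] with y hy using ih hk'.le hy
        rw [hev.deriv_eq, (hF k hk' t).deriv]
    intro k hk
    have hFT : F k T = 0 := by
      simp only [hFdef]
      have hg0 : g T = 0 := by
        simp only [hgdef, div_self hITne]
        ring
      rw [hg0]
      have hs : (∑ j ∈ Finset.range k,
          ((n.factorial : ℝ) / (n - j).factorial) * (T - T)^(n - j)) = 0 := by
        apply Finset.sum_eq_zero
        intro j hj
        have : 0 < n - j := by
          have := Finset.mem_range.1 hj
          omega
        rw [sub_self, zero_pow (by omega)]
        ring
      rw [hs]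
      simp
    have hFcont : ContinuousAt (F k) T := (hF k hk T).continuousAt
    have htend : Tendsto (F k) (nhdsWithin T (Iio T)) (nhds 0) := by
      rw [← hFT]
      exact (hFcont.continuousWithinAt).tendsto
    apply htend.congr'
    filter_upwards [Ioo_mem_nhdsLT_of_mem (show T ∈ Ioc (0:ℝ) T from ⟨hT, le_refl T⟩)]
      with y hy
    exact (hiter k hk.le hy).symm
end

section
/- Let $a_0\geq 1$, $\omega_0\in(0,a_0)$ and $K_1(t)=e^{-a_0 t}\cos(\omega_0 t)H(t)$ with Fourier transform $\hat K_1(\omega)=\frac{a_0-i2\pi\omega}{(a_0-i2\pi\omega)^2+\omega_0^2}$. Then $|\hat K_1(\omega)|<1$ for all $\omega\in\mathbb{R}$, so that $\alpha_1(\omega):=\log(1/|\hat K_1(\omega)|)>0$ for all $\omega$. -/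
lemma damped_key (X Y B : ℝ) (hX : 1 ≤ X) (hY : 0 < Y) (hYX : Y < X) (hB : 0 ≤ B) :
    X + B < (X - B + Y)^2 + 4*X*B := by
  rcases le_or_gt 1 (B + 2*(X - Y)) with h | h
  · nlinarith [mul_nonneg hB (by linarith : (0:ℝ) ≤ B + 2*(X-Y) - 1),
      mul_pos hY (lt_of_lt_of_le one_pos hX), mul_nonneg (by linarith : (0:ℝ) ≤ X - 1) (by linarith : (0:ℝ) ≤ X)]
  · nlinarith [sq_nonneg (B + (X - Y) - 1/2), mul_nonneg (by linarith : (0:ℝ) ≤ X - 1) hY.le]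

theorem damped_cosine_attenuation_positive (a0 ω0 : ℝ)
    (ha0 : 1 ≤ a0) (hω0 : 0 < ω0) (hωa : ω0 < a0) (ω : ℝ) :
    ‖(((a0 : ℂ) - Complex.I * (2*Real.pi*ω))
        / (((a0 : ℂ) - Complex.I * (2*Real.pi*ω))^2 + (ω0 : ℂ)^2))‖ < 1
    ∧ 0 < Real.log (1 / ‖(((a0 : ℂ) - Complex.I * (2*Real.pi*ω))
        / (((a0 : ℂ) - Complex.I * (2*Real.pi*ω))^2 + (ω0 : ℂ)^2))‖) := by
  set b : ℝ := 2*Real.pi*ω with hb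
  set n : ℂ := (a0 : ℂ) - Complex.I * (2*Real.pi*ω) with hn
  set d : ℂ := n^2 + (ω0 : ℂ)^2 with hd
  have hn2 : Complex.normSq n = a0^2 + b^2 := by
    simp [hn, hb, Complex.normSq_apply, Complex.sub_re, Complex.sub_im,
      Complex.mul_re, Complex.mul_im]
    ring
  have hd2 : Complex.normSq d = (a0^2 - b^2 + ω0^2)^2 + 4*a0^2*b^2 := by
    simp [hd, hn, hb, Complex.normSq_apply, Complex.sub_re, Complex.sub_im,
      Complex.mul_re, Complex.mul_im, pow_two, Complex.add_re, Complex.add_im]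
    ring
  have hkey : Complex.normSq n < Complex.normSq d := by
    rw [hn2, hd2]
    exact damped_key (a0^2) (ω0^2) (b^2) (by nlinarith) (by positivity)
      (by nlinarith) (sq_nonneg b)
  have hnpos : 0 < Complex.normSq n := by rw [hn2]; nlinarith [sq_nonneg b]
  have habs : ‖n‖ < ‖d‖ := by
    rw [Complex.norm_def, Complex.norm_def]
    exact Real.sqrt_lt_sqrt (Complex.normSq_nonneg n) hkey
  have habsn : 0 < ‖n‖ := by
    rw [Complex.norm_def]; exact Real.sqrt_pos.2 hnpos
  have habsd : 0 < ‖d‖ := lt_trans habsn habs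
  have h1 : ‖n / d‖ < 1 := by
    rw [norm_div, div_lt_one habsd]; exact habs
  have h0 : 0 < ‖n / d‖ := by
    rw [norm_div]; exact div_pos habsn habsd
  exact ⟨h1, Real.log_pos (one_lt_one_div h0 h1)⟩
end
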